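/- Assume u_k ≥ 1/c for all k ≥ 0, for some constant c ≥ 1. For N ≥ 1 let Q_N be the probability measure on the set of compositions (n_1,…,n_D) of N into positive integer parts given by Q_N((n_1,…,n_D)) := p_{n_1}⋯p_{n_D}/u_N. Then for every integer d ≥ 1 and all integers 1 ≤ a ≤ b ≤ N with b − a ≥ d: Q_N({(n_1,…,n_D) : no partial sum n_1 + ⋯ + n_i (0 ≤ i ≤ D) lies in {a, a+1, …, b−1}}) ≤ c·Σ_{k ≥ d} k·p_k. -/

import Mathlib

noncomputable section

/-- The renewal sequence `(u_N)` associated with the waiting-time distribution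
`(q_n)_{n ≥ 1}`: `u_0 = 1` and `u_N = Σ_{n=1}^N q_n · u_{N-n}`. -/
def renewalSeq (q : ℕ → ℝ) : ℕ → ℝ
  | 0 => 1
  | N + 1 => ∑ n ∈ Finset.range (N + 1), q (n + 1) * renewalSeq q (N - n)
  decreasing_by omega

namespace RenewalAux

/-- The finset of compositions of `m` into positive parts. -/
def comps : ℕ → Finset (List ℕ)
  | 0 => {[]}
  | m + 1 => (Finset.range (m + 1)).biUnion
      (fun n => (comps (m - n)).image (fun l => (n + 1) :: l))
  decreasing_by omega

lemma mem_comps : ∀ (m : ℕ) (l : List ℕ),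
    l ∈ comps m ↔ (∀ x ∈ l, 0 < x) ∧ l.sum = m := by
  intro m
  induction m using Nat.strong_induction_on with
  | _ m ih =>
    intro l
    match m with
    | 0 =>
      simp only [comps, Finset.mem_singleton]
      constructor
      · rintro rfl; simp
      · rintro ⟨h1, h2⟩
        cases l with
        | nil => rfl
        | cons x xs =>
          exfalso
          have hx := h1 x (by simp)
          simp [List.sum_cons] at h2
          omega
    | m + 1 =>
      simp only [comps, Finset.mem_biUnion, Finset.mem_image, Finset.mem_range]
      constructor
      · rintro ⟨n, hn, l', hl', rfl⟩
        obtain ⟨hpos, hsum⟩ := (ih (m - n) (by omega) l').1 hl'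
        refine ⟨?_, ?_⟩
        · intro x hx
          rcases List.mem_cons.1 hx with rfl | hx
          · omega
          · exact hpos x hx
        · simp only [List.sum_cons, hsum]; omega
      · rintro ⟨hpos, hsum⟩
        cases l with
        | nil => simp at hsum
        | cons x xs =>
          have hx := hpos x (by simp)
          simp only [List.sum_cons] at hsum
          refine ⟨x - 1, by omega, xs, ?_, by congr 1; omega⟩
          exact (ih (m - (x - 1)) (by omega) xs).2
            ⟨fun y hy => hpos y (List.mem_cons_of_mem _ hy), by omega⟩

/-- The weight of a composition. -/
def F (q : ℕ → ℝ) (l : List ℕ) : ℝ := (l.map q).prod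

lemma F_nonneg (q : ℕ → ℝ) (hq : ∀ n, 0 ≤ q n) (l : List ℕ) : 0 ≤ F q l := by
  apply List.prod_nonneg
  intro x hx
  obtain ⟨y, _, rfl⟩ := List.mem_map.1 hx
  exact hq y

lemma F_cons (q : ℕ → ℝ) (x : ℕ) (l : List ℕ) : F q (x :: l) = q x * F q l := by
  simp [F]

lemma F_append (q : ℕ → ℝ) (l₁ l₂ : List ℕ) : F q (l₁ ++ l₂) = F q l₁ * F q l₂ := by
  simp [F]

/-- Sum of weights of all compositions of `m`. -/
def S (q : ℕ → ℝ) (m : ℕ) : ℝ := ∑ l ∈ comps m, F q l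

lemma S_nonneg (q : ℕ → ℝ) (hq : ∀ n, 0 ≤ q n) (m : ℕ) : 0 ≤ S q m :=
  Finset.sum_nonneg fun l _ => F_nonneg q hq l

lemma S_rec (q : ℕ → ℝ) (m : ℕ) :
    S q (m + 1) = ∑ n ∈ Finset.range (m + 1), q (n + 1) * S q (m - n) := by
  rw [S, comps, Finset.sum_biUnion]
  · refine Finset.sum_congr rfl fun n _ => ?_
    rw [Finset.sum_image (by intro x _ y _ h; simpa using h)]
    rw [S, Finset.mul_sum]
    exact Finset.sum_congr rfl fun l _ => F_cons q (n + 1) l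
  · intro i _ j _ hij
    simp only [Finset.disjoint_left, Finset.mem_image]
    rintro l ⟨l₁, _, rfl⟩ ⟨l₂, _, h⟩
    simp only [List.cons.injEq] at h
    exact hij (by omega)

lemma partial_sum_le_one (q : ℕ → ℝ) (hq : ∀ n, 0 ≤ q n) (h1 : HasSum q 1)
    (m : ℕ) : ∑ n ∈ Finset.range (m + 1), q (n + 1) ≤ 1 := by
  have : ∑ n ∈ Finset.range (m + 1), q (n + 1)
      = ∑ j ∈ (Finset.range (m + 1)).image (· + 1), q j := by
    rw [Finset.sum_image (by intro x _ y _ h; dsimp only at h; omega)]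
  rw [this, ← h1.tsum_eq]
  exact Summable.sum_le_tsum _ (fun n _ => hq n) h1.summable

lemma S_le_one (q : ℕ → ℝ) (hq : ∀ n, 0 ≤ q n) (h1 : HasSum q 1) :
    ∀ m, S q m ≤ 1 := by
  intro m
  induction m using Nat.strong_induction_on with
  | _ m ih =>
    match m with
    | 0 => simp [S, comps, F]
    | m + 1 =>
      rw [S_rec]
      calc ∑ n ∈ Finset.range (m + 1), q (n + 1) * S q (m - n)
          ≤ ∑ n ∈ Finset.range (m + 1), q (n + 1) * 1 := by
            refine Finset.sum_le_sum fun n _ => ?_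
            exact mul_le_mul_of_nonneg_left (ih (m - n) (by omega)) (hq (n + 1))
        _ ≤ 1 := by simpa using partial_sum_le_one q hq h1 m

lemma length_le_sum : ∀ (l : List ℕ), (∀ x ∈ l, 0 < x) → l.length ≤ l.sum := by
  intro l
  induction l with
  | nil => simp
  | cons x xs ih =>
    intro h
    have hx := h x (by simp)
    have := ih (fun y hy => h y (List.mem_cons_of_mem _ hy))
    simp only [List.length_cons, List.sum_cons]
    omega

/-- Split a list at the first place where the partial sum reaches `a`. -/
def split (a : ℕ) : List ℕ → List ℕ × List ℕ
  | [] => ([], [])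
  | x :: xs => if a ≤ x then ([], x :: xs)
      else ((x :: (split (a - x) xs).1), (split (a - x) xs).2)

lemma split_append : ∀ (a : ℕ) (l : List ℕ), (split a l).1 ++ (split a l).2 = l := by
  intro a l
  induction l generalizing a with
  | nil => simp [split]
  | cons x xs ih => by_cases h : a ≤ x <;> simp [split, h, ih]

lemma split_fst_sum_lt : ∀ (a : ℕ) (l : List ℕ), 1 ≤ a → a ≤ l.sum →
    (split a l).1.sum < a := by
  intro a l
  induction l generalizing a with
  | nil => intro h1 h2; simp at h2; omega
  | cons x xs ih =>
    intro h1 h2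
    by_cases h : a ≤ x
    · simp [split, h]; omega
    · simp only [split, if_neg h, List.sum_cons]
      have := ih (a - x) (by omega) (by simp only [List.sum_cons] at h2; omega)
      omega

lemma split_head : ∀ (a : ℕ) (l : List ℕ), 1 ≤ a → a ≤ l.sum →
    a ≤ (split a l).1.sum + (split a l).2.headI := by
  intro a l
  induction l generalizing a with
  | nil => intro h1 h2; simp at h2; omega
  | cons x xs ih =>
    intro h1 h2
    by_cases h : a ≤ x
    · simp [split, h]
    · simp only [split, if_neg h, List.sum_cons]
      have := ih (a - x) (by omega) (by simp only [List.sum_cons] at h2; omega)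
      omega

end RenewalAux

open RenewalAux

/-- Long intervals are unlikely for the conditioned renewal process: the
`Q_N`-probability that no renewal point (partial sum of the composition) lies in
`{a, …, b-1}` is at most `c·Σ_{k ≥ d} k·q_k`, whenever `b - a ≥ d`. -/
theorem renewal_long_intervals_unlikely (q : ℕ → ℝ) (hq0 : q 0 = 0)
    (hq : ∀ n, 0 ≤ q n) (h1 : HasSum q 1)
    (hμ : Summable (fun n : ℕ => (n : ℝ) * q n))
    (c : ℝ) (hc : 1 ≤ c) (hu : ∀ k, 1 / c ≤ renewalSeq q k)
    (N : ℕ) (hN : 1 ≤ N) (d : ℕ) (hd : 1 ≤ d)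
    (a b : ℕ) (ha : 1 ≤ a) (hab : a + d ≤ b) (hbN : b ≤ N) :
    (∑' l : {l : List ℕ // (∀ x ∈ l, 0 < x) ∧ l.sum = N ∧
        ∀ i : ℕ, (l.take i).sum < a ∨ b ≤ (l.take i).sum},
      ((l : List ℕ).map q).prod / renewalSeq q N)
      ≤ c * ∑' k : ℕ, (if d ≤ k then (k : ℝ) * q k else 0) := by
  classical
  have hc0 : (0:ℝ) < c := lt_of_lt_of_le one_pos hc
  have hu0 : (0:ℝ) < renewalSeq q N := lt_of_lt_of_le (by positivity) (hu N)
  -- the finset of compositions avoiding [a, b)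
  set A : Finset (List ℕ) := (comps N).filter
    (fun l => ∀ i ∈ Finset.range (N + 1), (l.take i).sum < a ∨ b ≤ (l.take i).sum) with hA
  have hPA : ∀ l : List ℕ, ((∀ x ∈ l, 0 < x) ∧ l.sum = N ∧
      ∀ i : ℕ, (l.take i).sum < a ∨ b ≤ (l.take i).sum) ↔ l ∈ A := by
    intro l
    simp only [hA, Finset.mem_filter, mem_comps, Finset.mem_range]
    constructor
    · rintro ⟨hpos, hsum, hav⟩
      exact ⟨⟨hpos, hsum⟩, fun i _ => hav i⟩
    · rintro ⟨⟨hpos, hsum⟩, hav⟩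
      refine ⟨hpos, hsum, fun i => ?_⟩
      by_cases hi : i ≤ N
      · exact hav i (by omega)
      · have hlen : l.length ≤ N := hsum ▸ length_le_sum l hpos
        rw [List.take_of_length_le (by omega)]
        right; omega
  -- rewrite the tsum as a finite sum
  have hstep0 : (∑' l : {l : List ℕ // (∀ x ∈ l, 0 < x) ∧ l.sum = N ∧
        ∀ i : ℕ, (l.take i).sum < a ∨ b ≤ (l.take i).sum},
      ((l : List ℕ).map q).prod / renewalSeq q N)
      = (∑ l ∈ A, F q l) / renewalSeq q N := by
    rw [Finset.sum_div]
    rw [← Finset.tsum_subtype A (fun l => F q l / renewalSeq q N)]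
    exact (Equiv.subtypeEquivRight hPA).tsum_eq
      (fun l : A => F q (l : List ℕ) / renewalSeq q N)
  rw [hstep0]
  -- Step 1: inject into pairs
  set U : Finset (List ℕ) := (Finset.range (N + 1)).biUnion (comps) with hU
  set B : Finset (List ℕ × List ℕ) := (U ×ˢ U).filter
    (fun p => p.1.sum < a ∧ b ≤ p.1.sum + p.2.headI ∧ p.1.sum + p.2.sum = N) with hB
  have hmemU : ∀ l : List ℕ, (∀ x ∈ l, 0 < x) → l.sum ≤ N → l ∈ U := by
    intro l hpos hsum
    rw [hU, Finset.mem_biUnion]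
    exact ⟨l.sum, Finset.mem_range.2 (by omega), (mem_comps _ _).2 ⟨hpos, rfl⟩⟩
  have hstep1 : ∑ l ∈ A, F q l ≤ ∑ p ∈ B, F q p.1 * F q p.2 := by
    have hkey : ∀ l ∈ A, (split a l ∈ B ∧
        F q l = F q (split a l).1 * F q (split a l).2) := by
      intro l hlA
      obtain ⟨hpos, hsum, hav⟩ := (hPA l).2 hlA
      have haN : a ≤ l.sum := by omega
      have h1' := split_fst_sum_lt a l ha haN
      have h2' := split_head a l ha haN
      have h3' := split_append a l
      rcases hsp : split a l with ⟨l1, l2⟩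
      have h1'' : l1.sum < a := by rw [hsp] at h1'; exact h1'
      have h2'' : a ≤ l1.sum + l2.headI := by rw [hsp] at h2'; exact h2'
      have h3'' : l1 ++ l2 = l := by rw [hsp] at h3'; exact h3'
      have hpos1 : ∀ x ∈ l1, 0 < x := fun x hx =>
        hpos x (by rw [← h3'']; exact List.mem_append_left _ hx)
      have hpos2 : ∀ x ∈ l2, 0 < x := fun x hx =>
        hpos x (by rw [← h3'']; exact List.mem_append_right _ hx)
      have hsumsplit : l1.sum + l2.sum = N := by
        rw [← List.sum_append, h3'', hsum]
      have hne : l2 ≠ [] := by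
        intro hnil
        rw [hnil] at hsumsplit
        simp at hsumsplit
        omega
      have hjump : b ≤ l1.sum + l2.headI := by
        have htake : (l.take (l1.length + 1)).sum = l1.sum + l2.headI := by
          rw [← h3'']
          rw [List.take_append,
            List.take_of_length_le (by omega), List.sum_append]
          have hone : l1.length + 1 - l1.length = 1 := by omega
          rw [hone]
          cases l2 with
          | nil => exact absurd rfl hne
          | cons y ys => simp
        rcases hav (l1.length + 1) with hlt | hge
        · rw [htake] at hlt; omega
        · rw [htake] at hge; exact hge
      show (l1, l2) ∈ B ∧ F q l = F q l1 * F q l2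
      refine ⟨?_, by rw [← F_append, h3'']⟩
      simp only [hB, Finset.mem_filter, Finset.mem_product]
      exact ⟨⟨hmemU _ hpos1 (by omega), hmemU _ hpos2 (by omega)⟩, h1'', hjump, hsumsplit⟩
    calc ∑ l ∈ A, F q l = ∑ l ∈ A, F q (split a l).1 * F q (split a l).2 :=
          Finset.sum_congr rfl fun l hl => (hkey l hl).2
      _ = ∑ p ∈ A.image (split a), F q p.1 * F q p.2 := by
          rw [Finset.sum_image]
          intro x hx y hy hxy
          rw [← split_append a x, ← split_append a y, hxy]
      _ ≤ ∑ p ∈ B, F q p.1 * F q p.2 := by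
          refine Finset.sum_le_sum_of_subset_of_nonneg ?_ ?_
          · intro p hp
            obtain ⟨l, hl, rfl⟩ := Finset.mem_image.1 hp
            exact (hkey l hl).1
          · intro p _ _
            exact mul_nonneg (F_nonneg q hq _) (F_nonneg q hq _)
  -- Step 2: fiberwise bound over (s, t)
  set P2 : Finset (ℕ × ℕ) := Finset.range a ×ˢ Finset.Icc b N with hP2
  set G : List ℕ × List ℕ → ℕ × ℕ := fun p => (p.1.sum, p.1.sum + p.2.headI) with hG
  have hBmem : ∀ p ∈ B, ((∀ x ∈ p.1, 0 < x) ∧ (∀ x ∈ p.2, 0 < x) ∧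
      p.1.sum < a ∧ b ≤ p.1.sum + p.2.headI ∧ p.1.sum + p.2.sum = N) := by
    intro p hp
    simp only [hB, Finset.mem_filter, Finset.mem_product, hU] at hp
    obtain ⟨⟨hp1, hp2⟩, h3, h4, h5⟩ := hp
    obtain ⟨m1, _, hm1⟩ := Finset.mem_biUnion.1 hp1
    obtain ⟨m2, _, hm2⟩ := Finset.mem_biUnion.1 hp2
    exact ⟨((mem_comps _ _).1 hm1).1, ((mem_comps _ _).1 hm2).1, h3, h4, h5⟩
  have hhead_le_sum : ∀ l : List ℕ, l.headI ≤ l.sum := by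
    intro l; cases l <;> simp
  have hmaps : ∀ p ∈ B, G p ∈ P2 := by
    intro p hp
    obtain ⟨_, _, h3, h4, h5⟩ := hBmem p hp
    simp only [hG, hP2, Finset.mem_product, Finset.mem_range, Finset.mem_Icc]
    have := hhead_le_sum p.2
    exact ⟨h3, h4, by omega⟩
  have hstep2 : ∑ p ∈ B, F q p.1 * F q p.2 ≤ ∑ y ∈ P2, q (y.2 - y.1) := by
    rw [← Finset.sum_fiberwise_of_maps_to hmaps (fun p => F q p.1 * F q p.2)]
    refine Finset.sum_le_sum fun y hy => ?_
    obtain ⟨s, t⟩ := y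
    simp only [hP2, Finset.mem_product, Finset.mem_range, Finset.mem_Icc] at hy
    have hfiber : ∀ p ∈ B.filter (fun p => G p = (s, t)),
        p.1 ∈ comps s ∧ p.2 = (t - s) :: p.2.tail ∧ p.2.tail ∈ comps (N - t) := by
      intro p hp
      simp only [Finset.mem_filter] at hp
      obtain ⟨hpB, hpG⟩ := hp
      obtain ⟨hpos1, hpos2, h3, h4, h5⟩ := hBmem p hpB
      simp only [hG, Prod.mk.injEq] at hpG
      obtain ⟨hs, ht⟩ := hpG
      have hne : p.2 ≠ [] := by
        intro hnil
        rw [hnil] at ht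
        simp at ht
        omega
      have hcons : p.2 = (t - s) :: p.2.tail := by
        cases hp2 : p.2 with
        | nil => exact absurd hp2 hne
        | cons y ys =>
          rw [hp2] at ht
          simp only [List.headI] at ht
          simp only [List.tail]
          congr 1
          omega
      refine ⟨(mem_comps _ _).2 ⟨hpos1, hs⟩, hcons, ?_⟩
      refine (mem_comps _ _).2 ⟨fun x hx => hpos2 x (List.mem_of_mem_tail hx), ?_⟩
      have hsum2 : p.2.headI + p.2.tail.sum = p.2.sum := by
        cases hp2 : p.2 with
        | nil => exact absurd hp2 hne
        | cons y ys => simp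
      omega
    calc ∑ p ∈ B.filter (fun p => G p = (s, t)), F q p.1 * F q p.2
        = ∑ p ∈ B.filter (fun p => G p = (s, t)),
            q (t - s) * (F q p.1 * F q p.2.tail) := by
          refine Finset.sum_congr rfl fun p hp => ?_
          obtain ⟨_, hcons, _⟩ := hfiber p hp
          conv_lhs => rw [hcons]
          rw [F_cons]
          ring
      _ = q (t - s) * ∑ p ∈ B.filter (fun p => G p = (s, t)),
            F q p.1 * F q p.2.tail := (Finset.mul_sum _ _ _).symm
      _ ≤ q (t - s) * 1 := by
          refine mul_le_mul_of_nonneg_left ?_ (hq _)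
          calc ∑ p ∈ B.filter (fun p => G p = (s, t)), F q p.1 * F q p.2.tail
              = ∑ r ∈ (B.filter (fun p => G p = (s, t))).image
                  (fun p => (p.1, p.2.tail)), F q r.1 * F q r.2 := by
                rw [Finset.sum_image]
                intro x hx y hy hxy
                obtain ⟨_, hcx, _⟩ := hfiber x hx
                obtain ⟨_, hcy, _⟩ := hfiber y hy
                simp only [Prod.mk.injEq] at hxy
                obtain ⟨h1x, h2x⟩ := hxy
                have hx2 : x.2 = y.2 := by rw [hcx, hcy, h2x]
                exact Prod.ext h1x hx2
            _ ≤ ∑ r ∈ comps s ×ˢ comps (N - t), F q r.1 * F q r.2 := by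
                refine Finset.sum_le_sum_of_subset_of_nonneg ?_ ?_
                · intro r hr
                  obtain ⟨p, hp, rfl⟩ := Finset.mem_image.1 hr
                  obtain ⟨hc1, _, hc3⟩ := hfiber p hp
                  exact Finset.mem_product.2 ⟨hc1, hc3⟩
                · intro r _ _
                  exact mul_nonneg (F_nonneg q hq _) (F_nonneg q hq _)
            _ = S q s * S q (N - t) := by
                rw [Finset.sum_product, ← Finset.sum_mul_sum]
                rfl
            _ ≤ 1 := by
                have := S_le_one q hq h1 s
                have := S_le_one q hq h1 (N - t)
                have := S_nonneg q hq s
                have := S_nonneg q hq (N - t)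
                nlinarith
      _ = q (t - s) := mul_one _
  -- Step 3: counting
  have hstep3 : ∑ y ∈ P2, q (y.2 - y.1) ≤ ∑' k : ℕ, (if d ≤ k then (k : ℝ) * q k else 0) := by
    have hmaps2 : ∀ y ∈ P2, y.2 - y.1 ∈ Finset.Icc d N := by
      intro y hy
      simp only [hP2, Finset.mem_product, Finset.mem_range, Finset.mem_Icc] at hy
      rw [Finset.mem_Icc]
      omega
    rw [← Finset.sum_fiberwise_of_maps_to hmaps2 (fun y => q (y.2 - y.1))]
    have hsummable : Summable (fun k : ℕ => if d ≤ k then (k : ℝ) * q k else 0) := by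
      refine Summable.of_nonneg_of_le (fun n => ?_) (fun n => ?_) hμ
      · split
        · exact mul_nonneg (Nat.cast_nonneg _) (hq n)
        · exact le_refl 0
      · split
        · exact le_refl _
        · exact mul_nonneg (Nat.cast_nonneg _) (hq n)
    have hbound : ∀ k ∈ Finset.Icc d N,
        ∑ y ∈ P2.filter (fun y => y.2 - y.1 = k), q (y.2 - y.1)
          ≤ (if d ≤ k then (k : ℝ) * q k else 0) := by
      intro k hk
      rw [Finset.mem_Icc] at hk
      rw [if_pos hk.1]
      have hcard : (P2.filter (fun y => y.2 - y.1 = k)).card ≤ k := by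
        have hsub : P2.filter (fun y => y.2 - y.1 = k)
            ⊆ (Finset.Ico (b - k) a).image (fun s => (s, s + k)) := by
          intro y hy
          simp only [Finset.mem_filter, hP2, Finset.mem_product,
            Finset.mem_range, Finset.mem_Icc] at hy
          obtain ⟨⟨hs, ht1, ht2⟩, hk'⟩ := hy
          rw [Finset.mem_image]
          refine ⟨y.1, Finset.mem_Ico.2 (by omega), ?_⟩
          have hy2 : y.2 = y.1 + k := by omega
          exact Prod.ext rfl hy2.symm
        calc (P2.filter (fun y => y.2 - y.1 = k)).card
            ≤ ((Finset.Ico (b - k) a).image (fun s => (s, s + k))).card :=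
              Finset.card_le_card hsub
          _ ≤ (Finset.Ico (b - k) a).card := Finset.card_image_le
          _ = a - (b - k) := Nat.card_Ico _ _
          _ ≤ k := by omega
      calc ∑ y ∈ P2.filter (fun y => y.2 - y.1 = k), q (y.2 - y.1)
          = ∑ y ∈ P2.filter (fun y => y.2 - y.1 = k), q k := by
            refine Finset.sum_congr rfl fun y hy => ?_
            have := (Finset.mem_filter.1 hy).2
            rw [this]
        _ = ((P2.filter (fun y => y.2 - y.1 = k)).card : ℝ) * q k := by
            rw [Finset.sum_const, nsmul_eq_mul]
        _ ≤ (k : ℝ) * q k := by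
            refine mul_le_mul_of_nonneg_right ?_ (hq k)
            exact_mod_cast hcard
    calc ∑ k ∈ Finset.Icc d N, ∑ y ∈ P2.filter (fun y => y.2 - y.1 = k), q (y.2 - y.1)
        ≤ ∑ k ∈ Finset.Icc d N, (if d ≤ k then (k : ℝ) * q k else 0) :=
          Finset.sum_le_sum hbound
      _ ≤ ∑' k : ℕ, (if d ≤ k then (k : ℝ) * q k else 0) := by
          refine Summable.sum_le_tsum _ (fun k _ => ?_) hsummable
          split
          · exact mul_nonneg (Nat.cast_nonneg _) (hq k)
          · exact le_refl 0
  -- Assemble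
  have hSA : (0:ℝ) ≤ ∑ l ∈ A, F q l := Finset.sum_nonneg fun l _ => F_nonneg q hq l
  have h1u : 1 / renewalSeq q N ≤ c := by
    rw [div_le_iff₀ hu0]
    have h := hu N
    rw [div_le_iff₀ hc0] at h
    linarith [h]
  calc (∑ l ∈ A, F q l) / renewalSeq q N
      = (∑ l ∈ A, F q l) * (1 / renewalSeq q N) := by rw [mul_one_div]
    _ ≤ (∑ l ∈ A, F q l) * c := mul_le_mul_of_nonneg_left h1u hSA
    _ = c * (∑ l ∈ A, F q l) := mul_comm _ _
    _ ≤ c * ∑' k : ℕ, (if d ≤ k then (k : ℝ) * q k else 0) := by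
        refine mul_le_mul_of_nonneg_left ?_ hc0.le
        exact le_trans hstep1 (le_trans hstep2 hstep3)
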